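/- There are at most 2^(C·k²) combinatorially distinct 1-page crossing diagrams with at most k crossings, for some absolute constant C. Concretely: every 1-page crossing diagram with at most k crossings is combinatorially equivalent to one whose points are a subset of 4k fixed points on a circle, and the number of such diagrams is at most 2^(4k) · 2^(4k(4k-1)/2). -/

import Mathlib

/-- Chords are unordered pairs of circle positions (points labelled by naturals in
circular order).  `Interleaves c d` means the chords cross with pattern `a < x < b < y`. -/
def Interleaves (c d : Sym2 ℕ) : Prop :=
  ∃ a b x y : ℕ, c = s(a, b) ∧ d = s(x, y) ∧ a < x ∧ x < b ∧ b < y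

/-- Two chords cross iff their endpoint pairs interleave in the cyclic order. -/
def Crosses (c d : Sym2 ℕ) : Prop := Interleaves c d ∨ Interleaves d c

/-- A 1-page crossing diagram: a finite set of chords among points on a circle, such
that no chord is degenerate and every chord crosses at least one other chord. The points
of the diagram are the chord endpoints, so every point is incident to a chord. -/
structure OnePageDiagram where
  chords : Finset (Sym2 ℕ)
  nondiag : ∀ c ∈ chords, ¬ c.IsDiag
  crossed : ∀ c ∈ chords, ∃ d ∈ chords, Crosses c d

/-- The points (endpoints) of the diagram. -/
def OnePageDiagram.points (D : OnePageDiagram) : Set ℕ := {p | ∃ c ∈ D.chords, p ∈ c}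

/-- The number of crossing pairs of chords; each crossing pair is counted once since
`Interleaves` orients the pair. -/
noncomputable def OnePageDiagram.crossingNumber (D : OnePageDiagram) : ℕ :=
  {p : Sym2 ℕ × Sym2 ℕ | p.1 ∈ D.chords ∧ p.2 ∈ D.chords ∧ Interleaves p.1 p.2}.ncard

/-- Cyclic betweenness for circle positions. -/
def CBtw (x y z : ℕ) : Prop := (x < y ∧ y < z) ∨ (y < z ∧ z < x) ∨ (z < x ∧ x < y)

/-- Combinatorial equivalence of diagrams: a cyclic-order-preserving bijection of their
points taking chords to chords. -/
def OnePageDiagram.Equiv (D E : OnePageDiagram) : Prop :=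
  ∃ f : ℕ → ℕ, Set.BijOn f D.points E.points ∧
    (∀ a ∈ D.points, ∀ b ∈ D.points, ∀ c ∈ D.points, CBtw a b c → CBtw (f a) (f b) (f c)) ∧
    E.chords = D.chords.image (Sym2.map f)

/-- Auxiliary: the endpoints of a chord as a `Finset`. -/
def chordEnds (c : Sym2 ℕ) : Finset ℕ :=
  Sym2.lift ⟨fun a b => ({a, b} : Finset ℕ), fun a b => by
    ext x; simp [or_comm]⟩ c

lemma mem_chordEnds {p : ℕ} {c : Sym2 ℕ} : p ∈ chordEnds c ↔ p ∈ c := by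
  induction c using Sym2.ind with
  | _ a b => simp [chordEnds, Sym2.mem_iff]

lemma card_chordEnds (c : Sym2 ℕ) : (chordEnds c).card ≤ 2 := by
  induction c using Sym2.ind with
  | _ a b =>
    simpa [chordEnds] using Finset.card_insert_le a {b}

lemma diagram_ext {D E : OnePageDiagram} (h : D.chords = E.chords) : D = E := by
  cases D; cases E; cases h; rfl

theorem onePageDiagram_enumeration (k : ℕ) :
    (∀ D : OnePageDiagram, D.crossingNumber ≤ k →
      ∃ E : OnePageDiagram, D.Equiv E ∧ ∀ p ∈ E.points, p < 4 * k) ∧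
    {D : OnePageDiagram | ∀ p ∈ D.points, p < 4 * k}.ncard ≤
      2 ^ (4 * k) * 2 ^ (4 * k * (4 * k - 1) / 2) := by
  classical
  constructor
  · intro D hk
    -- the crossing pairs as a finset
    set S : Finset (Sym2 ℕ × Sym2 ℕ) :=
      (D.chords ×ˢ D.chords).filter (fun p => Interleaves p.1 p.2) with hS
    have hScard : S.card ≤ k := by
      have : {p : Sym2 ℕ × Sym2 ℕ | p.1 ∈ D.chords ∧ p.2 ∈ D.chords ∧ Interleaves p.1 p.2}
          = ↑S := by
        ext p; simp [hS, Finset.mem_filter, Finset.mem_product, and_assoc]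
      have h2 : D.crossingNumber = S.card := by
        rw [OnePageDiagram.crossingNumber, this, Set.ncard_coe_finset]
      omega
    -- every chord appears in some crossing pair
    have hchords_sub : D.chords ⊆ S.image Prod.fst ∪ S.image Prod.snd := by
      intro c hc
      obtain ⟨d, hd, hcd⟩ := D.crossed c hc
      rcases hcd with h | h
      · exact Finset.mem_union_left _ (Finset.mem_image.2 ⟨(c, d), by
          simp [hS, Finset.mem_filter, Finset.mem_product, hc, hd, h], rfl⟩)
      · exact Finset.mem_union_right _ (Finset.mem_image.2 ⟨(d, c), by
          simp [hS, Finset.mem_filter, Finset.mem_product, hc, hd, h], rfl⟩)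
    have hchordcard : D.chords.card ≤ 2 * k := by
      have := Finset.card_le_card hchords_sub
      have h1 := Finset.card_union_le (S.image Prod.fst) (S.image Prod.snd)
      have h2 := Finset.card_image_le (s := S) (f := Prod.fst)
      have h3 := Finset.card_image_le (s := S) (f := Prod.snd)
      omega
    -- the points as a finset
    set P : Finset ℕ := D.chords.biUnion chordEnds with hP
    have hPpoints : D.points = ↑P := by
      ext p
      simp only [OnePageDiagram.points, Set.mem_setOf_eq, hP, Finset.coe_biUnion,
        Set.mem_iUnion, Finset.mem_coe, mem_chordEnds]
      constructor
      · rintro ⟨c, hc, hpc⟩; exact ⟨c, hc, hpc⟩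
      · rintro ⟨c, hc, hpc⟩; exact ⟨c, hc, hpc⟩
    have hPcard : P.card ≤ 4 * k := by
      have h1 : P.card ≤ ∑ c ∈ D.chords, (chordEnds c).card := Finset.card_biUnion_le
      have h2 : ∑ c ∈ D.chords, (chordEnds c).card ≤ ∑ _c ∈ D.chords, 2 :=
        Finset.sum_le_sum (fun c _ => card_chordEnds c)
      simp only [Finset.sum_const, smul_eq_mul] at h2
      omega
    -- the relabelling map
    set n := P.card with hn
    set e := P.orderIsoOfFin (rfl : P.card = n) with he
    set f : ℕ → ℕ := fun x => if h : x ∈ P then (e.symm ⟨x, h⟩ : ℕ) else 0 with hf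
    have hfval : ∀ x (h : x ∈ P), f x = (e.symm ⟨x, h⟩ : ℕ) := by
      intro x h; simp [hf, h]
    have hflt : ∀ x ∈ P, f x < 4 * k := by
      intro x h
      rw [hfval x h]
      exact lt_of_lt_of_le (e.symm ⟨x, h⟩).2 hPcard
    have hfmono : ∀ a ∈ P, ∀ b ∈ P, a < b → f a < f b := by
      intro a ha b hb hab
      rw [hfval a ha, hfval b hb]
      have : (⟨a, ha⟩ : P) < ⟨b, hb⟩ := by exact_mod_cast hab
      exact_mod_cast e.symm.strictMono this
    have hfinj : Set.InjOn f (↑P : Set ℕ) := by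
      intro a ha b hb hab
      by_contra hne
      rcases lt_or_gt_of_ne hne with h | h
      · exact absurd hab (Nat.ne_of_lt (hfmono a ha b hb h))
      · exact absurd hab.symm (Nat.ne_of_lt (hfmono b hb a ha h))
    have hmemP : ∀ {p : ℕ} {c : Sym2 ℕ}, c ∈ D.chords → p ∈ c → p ∈ P := by
      intro p c hc hpc
      exact Finset.mem_biUnion.2 ⟨c, hc, mem_chordEnds.2 hpc⟩
    -- interleaving is preserved
    have hinter : ∀ c ∈ D.chords, ∀ d ∈ D.chords, Interleaves c d →
        Interleaves (Sym2.map f c) (Sym2.map f d) := by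
      rintro c hc d hd ⟨a, b, x, y, hcab, hdxy, h1, h2, h3⟩
      have ha : a ∈ P := hmemP hc (by rw [hcab]; simp)
      have hb : b ∈ P := hmemP hc (by rw [hcab]; simp)
      have hx : x ∈ P := hmemP hd (by rw [hdxy]; simp)
      have hy : y ∈ P := hmemP hd (by rw [hdxy]; simp)
      exact ⟨f a, f b, f x, f y, by rw [hcab, Sym2.map_pair_eq],
        by rw [hdxy, Sym2.map_pair_eq],
        hfmono a ha x hx h1, hfmono x hx b hb h2, hfmono b hb y hy h3⟩
    -- the new diagram
    have hnd : ∀ c' ∈ D.chords.image (Sym2.map f), ¬ c'.IsDiag := by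
      intro c' hc'
      obtain ⟨c, hc, rfl⟩ := Finset.mem_image.1 hc'
      induction c using Sym2.ind with
      | _ a b =>
        rw [Sym2.map_pair_eq, Sym2.isDiag_iff_proj_eq]
        intro hfe
        have ha : a ∈ P := hmemP hc (by simp)
        have hb : b ∈ P := hmemP hc (by simp)
        have : a = b := hfinj ha hb hfe
        exact D.nondiag _ hc (by rw [this]; exact Sym2.isDiag_iff_proj_eq |>.2 rfl)
    have hcr : ∀ c' ∈ D.chords.image (Sym2.map f),
        ∃ d' ∈ D.chords.image (Sym2.map f), Crosses c' d' := by
      intro c' hc'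
      obtain ⟨c, hc, rfl⟩ := Finset.mem_image.1 hc'
      obtain ⟨d, hd, hcd⟩ := D.crossed c hc
      refine ⟨Sym2.map f d, Finset.mem_image_of_mem _ hd, ?_⟩
      rcases hcd with h | h
      · exact Or.inl (hinter c hc d hd h)
      · exact Or.inr (hinter d hd c hc h)
    refine ⟨⟨D.chords.image (Sym2.map f), hnd, hcr⟩, ⟨f, ?_, ?_, rfl⟩, ?_⟩
    · -- BijOn
      have hEpts : OnePageDiagram.points ⟨D.chords.image (Sym2.map f), hnd, hcr⟩
          = f '' D.points := by
        ext p
        simp only [OnePageDiagram.points, Set.mem_setOf_eq, Set.mem_image,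
          Finset.mem_image]
        constructor
        · rintro ⟨c', ⟨c, hc, rfl⟩, hp⟩
          obtain ⟨q, hq, rfl⟩ := Sym2.mem_map.1 hp
          exact ⟨q, ⟨c, hc, hq⟩, rfl⟩
        · rintro ⟨q, ⟨c, hc, hq⟩, rfl⟩
          exact ⟨Sym2.map f c, ⟨c, hc, rfl⟩, Sym2.mem_map.2 ⟨q, hq, rfl⟩⟩
      rw [hEpts]
      exact (hPpoints ▸ hfinj).bijOn_image
    · -- CBtw preserved
      intro a ha b hb c hc habc
      rw [hPpoints] at ha hb hc
      rcases habc with ⟨h1, h2⟩ | ⟨h1, h2⟩ | ⟨h1, h2⟩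
      · exact Or.inl ⟨hfmono a ha b hb h1, hfmono b hb c hc h2⟩
      · exact Or.inr (Or.inl ⟨hfmono b hb c hc h1, hfmono c hc a ha h2⟩)
      · exact Or.inr (Or.inr ⟨hfmono c hc a ha h1, hfmono a ha b hb h2⟩)
    · -- points of E bounded
      intro p hp
      obtain ⟨c', hc', hpc'⟩ := hp
      obtain ⟨c, hc, rfl⟩ := Finset.mem_image.1 hc'
      obtain ⟨q, hq, rfl⟩ := Sym2.mem_map.1 hpc'
      exact hflt q (hmemP hc hq)
  · -- counting
    set A : Finset (Sym2 ℕ) := (Finset.range (4 * k)).sym2 with hA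
    have hmaps : ∀ D ∈ {D : OnePageDiagram | ∀ p ∈ D.points, p < 4 * k},
        D.chords ∈ A.powerset := by
      intro D hD
      rw [Finset.mem_powerset]
      intro c hc
      induction c using Sym2.ind with
      | _ a b =>
        rw [hA, Finset.mk_mem_sym2_iff, Finset.mem_range, Finset.mem_range]
        exact ⟨hD a ⟨_, hc, by simp⟩, hD b ⟨_, hc, by simp⟩⟩
    have hinj : Set.InjOn OnePageDiagram.chords
        {D : OnePageDiagram | ∀ p ∈ D.points, p < 4 * k} :=
      fun D _ E _ h => diagram_ext h
    have himg : OnePageDiagram.chords '' {D : OnePageDiagram | ∀ p ∈ D.points, p < 4 * k}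
        ⊆ ↑A.powerset := by
      rintro _ ⟨D, hD, rfl⟩; exact hmaps D hD
    have h1 : {D : OnePageDiagram | ∀ p ∈ D.points, p < 4 * k}.ncard
        ≤ A.powerset.card := by
      rw [← Set.ncard_image_of_injOn hinj]
      calc _ ≤ (↑A.powerset : Set (Finset (Sym2 ℕ))).ncard :=
              Set.ncard_le_ncard himg A.powerset.finite_toSet
        _ = A.powerset.card := Set.ncard_coe_finset _
    have hAcard : A.card = (4 * k) * (4 * k + 1) / 2 := by
      rw [hA, Finset.card_sym2, Finset.card_range, Nat.choose_two_right]
      simp [Nat.mul_comm]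
    rw [Finset.card_powerset, hAcard] at h1
    refine h1.trans ?_
    rw [← pow_add]
    apply Nat.pow_le_pow_right (by norm_num)
    -- (4k)(4k+1)/2 ≤ 4k + 4k(4k-1)/2
    set m := 4 * k with hm
    have hev : ∃ t, m * (m - 1) = t + t := by
      cases m with
      | zero => exact ⟨0, rfl⟩
      | succ j =>
        obtain ⟨t, ht⟩ := Nat.even_mul_succ_self j
        exact ⟨t, by rw [Nat.succ_sub_one, Nat.mul_comm]; exact ht⟩
    obtain ⟨t, ht⟩ := hev
    have hid : m * (m + 1) = m * (m - 1) + 2 * m := by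
      cases m with
      | zero => rfl
      | succ j => rw [Nat.succ_sub_one]; ring
    omega
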